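/- Let L_C, L_D, L_E > 0 and define x := (-L_D*(L_C+L_D) + sqrt(L_D*(L_C+L_D)*(L_D+L_E)*(L_C+L_D+L_E)))/(L_C + 2*L_D + L_E) and y := L_C*(L_C+L_D+x)/(L_C + 2*L_D + 2*x). Then 0 < x < L_E, 0 < y < L_C, and the pair (x,y) satisfies the two equations y*(L_D + x) = (L_C + L_D + x)*(L_C - y) and y*L_D*(L_E - x) = (L_C + L_D + L_E)*(L_C - y)*x. -/
import Mathlib


/-- **Solution of the perpendicularity and concurrency system (Appendix A).**
Let `L_C, L_D, L_E > 0` and define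
`x := (-L_D(L_C+L_D) + √(L_D(L_C+L_D)(L_D+L_E)(L_C+L_D+L_E)))/(L_C + 2L_D + L_E)` and
`y := L_C(L_C+L_D+x)/(L_C + 2L_D + 2x)`.  Then `0 < x < L_E`, `0 < y < L_C`, and
`(x, y)` satisfies the two equations
`y(L_D + x) = (L_C + L_D + x)(L_C - y)` and
`y L_D (L_E - x) = (L_C + L_D + L_E)(L_C - y) x`. -/
theorem perpendicularity_concurrency_solution (LC LD LE : ℝ)
    (hC : 0 < LC) (hD : 0 < LD) (hE : 0 < LE) :
    let x := (-(LD * (LC + LD)) +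
        Real.sqrt (LD * (LC + LD) * (LD + LE) * (LC + LD + LE))) / (LC + 2 * LD + LE)
    let y := LC * (LC + LD + x) / (LC + 2 * LD + 2 * x)
    0 < x ∧ x < LE ∧ 0 < y ∧ y < LC ∧
      y * (LD + x) = (LC + LD + x) * (LC - y) ∧
      y * LD * (LE - x) = (LC + LD + LE) * (LC - y) * x := by
  have hT : (0:ℝ) < LC + 2 * LD + LE := by linarith
  set s := Real.sqrt (LD * (LC + LD) * (LD + LE) * (LC + LD + LE)) with hsdef
  have hprod : (0:ℝ) ≤ LD * (LC + LD) * (LD + LE) * (LC + LD + LE) := by positivity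
  have hs0 : 0 ≤ s := Real.sqrt_nonneg _
  have hs2 : s ^ 2 = LD * (LC + LD) * (LD + LE) * (LC + LD + LE) := Real.sq_sqrt hprod
  have hsgt : LD * (LC + LD) < s := by
    rw [hsdef]
    refine (Real.lt_sqrt (by positivity)).mpr ?_
    nlinarith [mul_pos hD (show (0:ℝ) < LC + LD by linarith), mul_pos hE hT]
  have hslt : s < LD * (LC + LD) + LE * (LC + 2 * LD + LE) := by
    rw [hsdef]
    refine (Real.sqrt_lt' (by positivity)).mpr ?_
    nlinarith [mul_pos hE hT, mul_pos hD (show (0:ℝ) < LC + LD by linarith), sq_nonneg (LE * (LC + 2 * LD + LE))]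
  intro x y
  have hx0 : 0 < x := by
    have : 0 < -(LD * (LC + LD)) + s := by linarith
    exact div_pos this hT
  have hxE : x < LE := by
    rw [show x = (-(LD * (LC + LD)) + s) / (LC + 2 * LD + LE) from rfl,
      div_lt_iff₀ hT]
    nlinarith [hslt]
  -- quadratic satisfied by x
  have hq : (LC + 2 * LD + LE) * x ^ 2 + 2 * (LD * (LC + LD)) * x
      = LD * (LC + LD) * LE := by
    have hx : x = (-(LD * (LC + LD)) + s) / (LC + 2 * LD + LE) := rfl
    rw [hx]
    field_simp
    nlinarith [hs2]
  have hden : 0 < LC + 2 * LD + 2 * x := by linarith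
  have hy : y = LC * (LC + LD + x) / (LC + 2 * LD + 2 * x) := rfl
  have hy0 : 0 < y := by
    rw [hy]; positivity
  have hyC : y < LC := by
    rw [hy, div_lt_iff₀ hden]
    nlinarith [mul_pos hC (show 0 < LD + x by linarith)]
  refine ⟨hx0, hxE, hy0, hyC, ?_, ?_⟩
  · rw [hy]
    field_simp
    ring
  · rw [hy]
    field_simp
    nlinarith [hq, mul_pos hC hden]
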